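/- Let α > 1 and r ≥ 2 be given with r an integer. Then the function f(x) = (1 - r·x)/(1 - x)^{r/α} is strictly decreasing on the interval [0, 1). -/

import Mathlib

/-- The function f(x) = (1 - r·x)/(1 - x)^{r/α} is strictly decreasing on [0, 1),
for real α > 1 and integer r ≥ 2. -/
theorem fact1_strictAntiOn (α : ℝ) (hα : 1 < α) (r : ℕ) (hr : 2 ≤ r) :
    StrictAntiOn (fun x : ℝ => (1 - (r : ℝ) * x) / (1 - x) ^ ((r : ℝ) / α))
      (Set.Ico (0 : ℝ) 1) := by
  have hαpos : (0:ℝ) < α := by linarith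
  set p : ℝ := (r : ℝ) / α with hp
  have hrpos : (0:ℝ) < r := by positivity
  have hr2 : (2:ℝ) ≤ r := by exact_mod_cast hr
  apply strictAntiOn_of_deriv_neg (convex_Ico 0 1)
  · apply ContinuousOn.div
    · fun_prop
    · apply ContinuousOn.rpow_const
      · fun_prop
      · intro x hx
        exact Or.inl (by simp only [Set.mem_Ico] at hx; intro h; nlinarith [hx.2])
    · intro x hx
      simp only [Set.mem_Ico] at hx
      exact (Real.rpow_pos_of_pos (by linarith [hx.2]) p).ne'
  · intro x hx
    rw [interior_Ico] at hx
    obtain ⟨hx0, hx1⟩ := hx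
    have h1x : (0:ℝ) < 1 - x := by linarith
    have hg : HasDerivAt (fun y : ℝ => (1 - y) ^ p) (p * (1 - x) ^ (p - 1) * (-1)) x := by
      have hbase : HasDerivAt (fun y : ℝ => 1 - y) (-1) x := (hasDerivAt_id x).const_sub 1
      exact (Real.hasDerivAt_rpow_const (Or.inl h1x.ne')).comp x hbase
    have hnum : HasDerivAt (fun y : ℝ => 1 - (r : ℝ) * y) (-(r : ℝ)) x := by
      simpa using ((hasDerivAt_id x).const_mul (r : ℝ)).const_sub 1
    have hf := hnum.div hg (Real.rpow_pos_of_pos h1x p).ne'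
    rw [HasDerivAt.deriv (f := fun y : ℝ => (1 - (r : ℝ) * y) / (1 - y) ^ p) hf]
    apply div_neg_of_neg_of_pos
    · have key : (1 - x) ^ p = (1 - x) ^ (p - 1) * (1 - x) := by
        rw [← Real.rpow_add_one h1x.ne' (p - 1)]
        ring_nf
      have hlin : p * (1 - (r : ℝ) * x) < (r : ℝ) * (1 - x) := by
        rw [hp, div_mul_eq_mul_div, div_lt_iff₀ hαpos]
        nlinarith [mul_nonneg (mul_nonneg hrpos.le hx0.le) (by linarith : (0:ℝ) ≤ (r:ℝ) - 1),
          mul_pos (mul_pos hrpos (by linarith : (0:ℝ) < α - 1)) h1x]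
      have hpow : (0:ℝ) < (1 - x) ^ (p - 1) := Real.rpow_pos_of_pos h1x _
      calc -(r : ℝ) * (1 - x) ^ p - (1 - (r : ℝ) * x) * (p * (1 - x) ^ (p - 1) * (-1))
          = (1 - x) ^ (p - 1) * (p * (1 - (r : ℝ) * x) - (r : ℝ) * (1 - x)) := by
            rw [key]; ring
        _ < 0 := mul_neg_of_pos_of_neg hpow (by linarith)
    · exact pow_pos (Real.rpow_pos_of_pos h1x p) 2
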